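/- Let G be a finite group in which every maximal subgroup is nilpotent. Then G is solvable. -/

import Mathlib

open Subgroup

namespace Redei7

variable {G : Type*} [Group G] [Fintype G]

/-- conjugate subgroup `g M g⁻¹` -/
private def cj (g : G) (M : Subgroup G) : Subgroup G := M.map (MulAut.conj g).toMonoidHom

private lemma mem_cj {g x : G} {M : Subgroup G} : x ∈ cj g M ↔ g⁻¹ * x * g ∈ M := by
  rw [cj, Subgroup.mem_map_equiv]; simp [MulAut.conj]

private lemma isCoatom_cj {M : Subgroup G} (g : G) (hM : IsCoatom M) : IsCoatom (cj g M) :=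
  ((MulEquiv.mapSubgroup (MulAut.conj g)).isCoatom_iff M).mpr hM

private lemma card_cj (g : G) (M : Subgroup G) : Nat.card (cj g M) = Nat.card M :=
  Nat.card_congr (Subgroup.equivMapOfInjective M _ (MulAut.conj g).injective).toEquiv.symm

private lemma cj_cj (g h : G) (M : Subgroup G) : cj g (cj h M) = cj (g * h) M := by
  ext x
  simp only [mem_cj]
  have e : h⁻¹ * (g⁻¹ * x * g) * h = (g * h)⁻¹ * x * (g * h) := by group
  rw [e]

private lemma cj_one (M : Subgroup G) : cj 1 M = M := by
  ext x; simp [mem_cj]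

private lemma cj_eq_self_iff {g : G} {M : Subgroup G} : cj g M = M ↔ g ∈ normalizer (M : Set G) := by
  rw [Subgroup.mem_normalizer_iff, SetLike.ext_iff]
  constructor
  · intro A h
    have H := A (g * h * g⁻¹)
    rw [mem_cj] at H
    have e : g⁻¹ * (g * h * g⁻¹) * g = h := by group
    rw [e] at H
    exact H
  · intro A x
    rw [mem_cj]
    have H := A (g⁻¹ * x * g)
    have e : g * (g⁻¹ * x * g) * g⁻¹ = x := by group
    rw [e] at H
    exact H

private lemma cj_eq_cj_iff {a b : G} {M : Subgroup G} :
    cj a M = cj b M ↔ b⁻¹ * a ∈ normalizer (M : Set G) := by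
  rw [← cj_eq_self_iff (g := b⁻¹ * a), ← cj_cj]
  constructor
  · intro h
    rw [h, cj_cj, inv_mul_cancel, cj_one]
  · intro h
    have h2 := congrArg (cj b) h
    rwa [cj_cj, mul_inv_cancel, cj_one] at h2


private lemma card_lt_of_lt {A B : Subgroup G} (h : A < B) : Nat.card A < Nat.card B := by
  rw [← SetLike.coe_sort_coe, ← SetLike.coe_sort_coe, Nat.card_coe_set_eq,
    Nat.card_coe_set_eq]
  exact Set.ncard_lt_ncard (by exact_mod_cast h) (Set.toFinite _)

private lemma exists_normalizing {D M : Subgroup G} (hnil : Group.IsNilpotent ↥M)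
    (hDM : D ≤ M) (hne : D ≠ M) : ∃ x, x ∈ M ∧ x ∉ D ∧ x ∈ normalizer (D : Set G) := by
  have hKt : D.subgroupOf M ≠ ⊤ := fun hle =>
    hne (le_antisymm hDM (Subgroup.subgroupOf_eq_top.mp hle))
  have nc := normalizerCondition_of_isNilpotent (G := ↥M)
  have hlt := nc (D.subgroupOf M) (lt_top_iff_ne_top.mpr hKt)
  obtain ⟨x, hxn, hxK⟩ := SetLike.exists_of_lt hlt
  refine ⟨(x : G), x.2, fun hxD => hxK (Subgroup.mem_subgroupOf.mpr hxD), ?_⟩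
  rw [Subgroup.mem_normalizer_iff]
  intro k
  constructor
  · intro hD
    have hkM : k ∈ M := hDM hD
    have h1 : (⟨k, hkM⟩ : ↥M) ∈ D.subgroupOf M := Subgroup.mem_subgroupOf.mpr hD
    have h2 := (Subgroup.mem_normalizer_iff.mp hxn ⟨k, hkM⟩).mp h1
    have h3 := Subgroup.mem_subgroupOf.mp h2
    simpa using h3
  · intro hD
    have hconjM : (x : G) * k * (x : G)⁻¹ ∈ M := hDM hD
    have hkM : k ∈ M := by
      have h4 := M.mul_mem (M.mul_mem (M.inv_mem x.2) hconjM) x.2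
      have e : (x : G)⁻¹ * ((x : G) * k * (x : G)⁻¹) * (x : G) = k := by group
      rwa [e] at h4
    have h1 : x * (⟨k, hkM⟩ : ↥M) * x⁻¹ ∈ D.subgroupOf M := by
      apply Subgroup.mem_subgroupOf.mpr
      simpa using hD
    have h2 := (Subgroup.mem_normalizer_iff.mp hxn ⟨k, hkM⟩).mpr h1
    exact Subgroup.mem_subgroupOf.mp h2

section Simple

variable (hco : ∀ M : Subgroup G, IsCoatom M → Group.IsNilpotent ↥M)
variable (hsim : ∀ N : Subgroup G, N.Normal → N = ⊥ ∨ N = ⊤)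

include hco hsim in
private lemma inter_eq_bot :
    ∀ M1 M2 : Subgroup G, IsCoatom M1 → IsCoatom M2 → M1 ≠ M2 → M1 ⊓ M2 = ⊥ := by
  by_contra hbad
  push_neg at hbad
  set s : Set (Subgroup G) :=
    {D | D ≠ ⊥ ∧ ∃ M1 M2, IsCoatom M1 ∧ IsCoatom M2 ∧ M1 ≠ M2 ∧ M1 ⊓ M2 = D} with hs
  have hns : s.Nonempty := by
    obtain ⟨M1, M2, h1, h2, hne, hD⟩ := hbad
    exact ⟨M1 ⊓ M2, hD, M1, M2, h1, h2, hne, rfl⟩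
  obtain ⟨D, hDs, hmax⟩ :=
    Set.Finite.exists_maximalFor (fun D : Subgroup G => Nat.card D) s (Set.toFinite s) hns
  obtain ⟨hDbot, M1, M2, h1, h2, h12, hD⟩ := hDs
  have hmax' : ∀ E ∈ s, ¬ (Nat.card D < Nat.card E) := fun E hE hlt =>
    absurd (hmax hE hlt.le) (not_le.mpr hlt)
  have hDle1 : D ≤ M1 := hD ▸ inf_le_left
  have hDle2 : D ≤ M2 := hD ▸ inf_le_right
  have hDne1 : D ≠ M1 := by
    intro e
    have : M1 ≤ M2 := inf_eq_left.mp (hD.trans e)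
    exact h2.1 (h1.2 M2 (lt_of_le_of_ne this h12))
  have hDne2 : D ≠ M2 := by
    intro e
    have : M2 ≤ M1 := inf_eq_right.mp (hD.trans e)
    exact h1.1 (h2.2 M1 (lt_of_le_of_ne this (Ne.symm h12)))
  obtain ⟨x1, hx1M, hx1D, hx1N⟩ := exists_normalizing (hco M1 h1) hDle1 hDne1
  obtain ⟨x2, hx2M, hx2D, hx2N⟩ := exists_normalizing (hco M2 h2) hDle2 hDne2
  have hNt : normalizer (D : Set G) ≠ ⊤ := by
    intro ht
    have hn : D.Normal := Subgroup.normalizer_eq_top_iff.mp ht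
    rcases hsim D hn with hb | hb
    · exact hDbot hb
    · rw [hb] at hDle1; exact h1.1 (top_le_iff.mp hDle1)
  obtain ⟨M3, hM3, hNle⟩ := (eq_top_or_exists_le_coatom (normalizer (D : Set G))).resolve_left hNt
  have force : ∀ M : Subgroup G, IsCoatom M → D ≤ M →
      (∃ x, x ∈ M ∧ x ∉ D ∧ x ∈ normalizer (D : Set G)) → M3 = M := by
    rintro M hM hle ⟨x, hxM, hxD, hxN⟩
    by_contra hne
    have hE : D < M ⊓ M3 := by
      apply lt_of_le_of_ne (le_inf hle ((Subgroup.le_normalizer (H := D)).trans hNle))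
      intro e
      exact hxD (e ▸ (Subgroup.mem_inf.mpr ⟨hxM, hNle hxN⟩))
    have hEs : (M ⊓ M3) ∈ s := by
      refine ⟨?_, M, M3, hM, hM3, fun e => hne e.symm, rfl⟩
      intro e
      exact hDbot (le_bot_iff.mp (e ▸ hE.le))
    exact hmax' _ hEs (card_lt_of_lt hE)
  have e1 := force M1 h1 hDle1 ⟨x1, hx1M, hx1D, hx1N⟩
  have e2 := force M2 h2 hDle2 ⟨x2, hx2M, hx2D, hx2N⟩
  exact h12 (e1 ▸ e2)

include hsim in
private lemma normalizer_coatom {M : Subgroup G} (hM : IsCoatom M) (hMb : M ≠ ⊥) :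
    normalizer (M : Set G) = M := by
  rcases (Subgroup.le_normalizer (H := M)).lt_or_eq with hlt | he
  · exfalso
    have ht : normalizer (M : Set G) = ⊤ := hM.2 _ hlt
    have hn : M.Normal := Subgroup.normalizer_eq_top_iff.mp ht
    rcases hsim M hn with hb | hb
    · exact hMb hb
    · exact hM.1 hb
  · exact he.symm

open scoped Classical in
private noncomputable def orb (M : Subgroup G) : Finset (Subgroup G) :=
  Finset.image (fun g => cj g M) Finset.univ

private lemma mem_orb {M K : Subgroup G} : K ∈ orb M ↔ ∃ g, cj g M = K := by
  classical
  simp [orb]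

private lemma orb_card {M : Subgroup G} (hself : normalizer (M : Set G) = M) :
    (orb M).card = M.index := by
  classical
  let F : G ⧸ M → Subgroup G := fun q =>
    Quotient.liftOn' q (fun g => cj g M) (by
      intro a b hab
      have hab' : a⁻¹ * b ∈ M := (QuotientGroup.leftRel_apply).mp hab
      apply cj_eq_cj_iff.mpr
      rw [hself]
      simpa using M.inv_mem hab')
  have hF : ∀ g : G, F (QuotientGroup.mk g) = cj g M := fun g => rfl
  have hFinj : Function.Injective F := by
    intro qa qb
    induction qa using Quotient.inductionOn' with
    | h a =>
    induction qb using Quotient.inductionOn' with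
    | h b =>
    intro hab
    have : cj a M = cj b M := hab
    have hm : b⁻¹ * a ∈ M := hself ▸ cj_eq_cj_iff.mp this
    apply Quotient.sound'
    apply (QuotientGroup.leftRel_apply).mpr
    simpa using M.inv_mem hm
  have horb : orb M = Finset.image F Finset.univ := by
    ext K
    simp only [orb, Finset.mem_image, Finset.mem_univ, true_and]
    constructor
    · rintro ⟨g, rfl⟩; exact ⟨QuotientGroup.mk g, rfl⟩
    · rintro ⟨q, rfl⟩
      obtain ⟨g, rfl⟩ := QuotientGroup.mk_surjective q
      exact ⟨g, rfl⟩
  rw [horb, Finset.card_image_of_injective _ hFinj, Finset.card_univ,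
    Subgroup.index_eq_card, Nat.card_eq_fintype_card]

open scoped Classical in
private noncomputable def SS (M : Subgroup G) : Finset G :=
  (orb M).biUnion (fun K => Finset.univ.filter (fun x => x ∈ K ∧ x ≠ 1))

private lemma mem_SS {M : Subgroup G} {x : G} :
    x ∈ SS M ↔ x ≠ 1 ∧ ∃ g, x ∈ cj g M := by
  classical
  simp only [SS, Finset.mem_biUnion, Finset.mem_filter, Finset.mem_univ, true_and]
  constructor
  · rintro ⟨K, hK, hxK, hx1⟩
    obtain ⟨g, rfl⟩ := mem_orb.mp hK
    exact ⟨hx1, g, hxK⟩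
  · rintro ⟨hx1, g, hxg⟩
    exact ⟨cj g M, mem_orb.mpr ⟨g, rfl⟩, hxg, hx1⟩

private lemma filter_card {K : Subgroup G} [DecidablePred (· ∈ K)] [DecidableEq G] :
    (Finset.univ.filter (fun x => x ∈ K ∧ x ≠ 1)).card = Nat.card K - 1 := by
  have h1K : (1 : G) ∈ Finset.univ.filter (· ∈ K) := by simp [K.one_mem]
  have he : Finset.univ.filter (fun x => x ∈ K ∧ x ≠ 1)
      = (Finset.univ.filter (· ∈ K)).erase 1 := by
    ext x
    simp [Finset.mem_erase, and_comm]
  rw [he, Finset.card_erase_of_mem h1K]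
  congr 1
  rw [Nat.card_eq_fintype_card, Fintype.card_subtype]

include hco hsim in
private lemma SS_card {M : Subgroup G} (hM : IsCoatom M) (hMb : M ≠ ⊥) :
    (SS M).card = (orb M).card * (Nat.card M - 1) := by
  classical
  rw [SS, Finset.card_biUnion]
  · rw [Finset.sum_congr rfl (fun K hK => ?_), Finset.sum_const, smul_eq_mul]
    obtain ⟨g, rfl⟩ := mem_orb.mp hK
    rw [filter_card, card_cj]
  · intro K1 hK1 K2 hK2 hne
    obtain ⟨g1, rfl⟩ := mem_orb.mp hK1
    obtain ⟨g2, rfl⟩ := mem_orb.mp hK2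
    have hbot := inter_eq_bot hco hsim _ _ (isCoatom_cj g1 hM) (isCoatom_cj g2 hM) hne
    rw [Function.onFun, Finset.disjoint_left]
    intro x hx1 hx2
    simp only [Finset.mem_filter, Finset.mem_univ, true_and] at hx1 hx2
    have : x ∈ cj g1 M ⊓ cj g2 M := Subgroup.mem_inf.mpr ⟨hx1.1, hx2.1⟩
    rw [hbot, Subgroup.mem_bot] at this
    exact hx1.2 this

include hco hsim in
private lemma counts {M : Subgroup G} (hM : IsCoatom M) (hMb : M ≠ ⊥) :
    (SS M).card + (orb M).card = Nat.card G ∧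
    2 * (orb M).card ≤ Nat.card G ∧ 2 ≤ (orb M).card := by
  have hself := normalizer_coatom hsim hM hMb
  have hoc : (orb M).card = M.index := orb_card hself
  have hprod : (orb M).card * Nat.card M = Nat.card G := by
    rw [hoc]; exact Subgroup.index_mul_card M
  have hm2 : 2 ≤ Nat.card M := (Subgroup.one_lt_card_iff_ne_bot M).mpr hMb
  have hSS : (SS M).card = (orb M).card * (Nat.card M - 1) := SS_card hco hsim hM hMb
  have hkey : (SS M).card + (orb M).card = Nat.card G := by
    rw [hSS, ← hprod]
    have : Nat.card M - 1 + 1 = Nat.card M := by omega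
    calc (orb M).card * (Nat.card M - 1) + (orb M).card
        = (orb M).card * (Nat.card M - 1 + 1) := by ring
      _ = (orb M).card * Nat.card M := by rw [this]
  refine ⟨hkey, ?_, ?_⟩
  · calc 2 * (orb M).card = (orb M).card * 2 := by ring
      _ ≤ (orb M).card * Nat.card M := Nat.mul_le_mul_left _ hm2
      _ = Nat.card G := hprod
  · have hne0 : M.index ≠ 0 := Subgroup.index_ne_zero_of_finite
    have hne1 : M.index ≠ 1 := fun e => hM.1 (Subgroup.index_eq_one.mp e)
    rw [hoc]
    omega

include hco hsim in
private lemma no_simple [Nontrivial G] (hncyc : ∀ g : G, zpowers g ≠ ⊤) : False := by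
  classical
  obtain ⟨g0, hg0⟩ := exists_ne (1 : G)
  obtain ⟨M1, hM1, hle1⟩ := (eq_top_or_exists_le_coatom (zpowers g0)).resolve_left (hncyc g0)
  have hg0M1 : g0 ∈ M1 := hle1 (mem_zpowers g0)
  have hM1b : M1 ≠ ⊥ := by
    intro e; rw [e, Subgroup.mem_bot] at hg0M1; exact hg0 hg0M1
  obtain ⟨hc1, hb1, hn1⟩ := counts hco hsim hM1 hM1b
  -- the set of nontrivial elements
  have hSSsub : ∀ (M : Subgroup G), SS M ⊆ Finset.univ.erase 1 := by
    intro M x hx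
    exact Finset.mem_erase.mpr ⟨(mem_SS.mp hx).1, Finset.mem_univ x⟩
  have herase : (Finset.univ.erase (1 : G)).card = Nat.card G - 1 := by
    rw [Finset.card_erase_of_mem (Finset.mem_univ 1), Finset.card_univ, Nat.card_eq_fintype_card]
  have hGpos : 1 ≤ Nat.card G := Nat.card_pos
  -- find g1 outside SS M1
  obtain ⟨g1, hg1mem, hg1not⟩ : ∃ x ∈ Finset.univ.erase (1 : G), x ∉ SS M1 := by
    by_contra hc
    push_neg at hc
    have hsub : Finset.univ.erase (1 : G) ⊆ SS M1 := fun x hx => hc x hx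
    have := Finset.card_le_card hsub
    omega
  have hg1ne : g1 ≠ 1 := (Finset.mem_erase.mp hg1mem).1
  obtain ⟨M2, hM2, hle2⟩ := (eq_top_or_exists_le_coatom (zpowers g1)).resolve_left (hncyc g1)
  have hg1M2 : g1 ∈ M2 := hle2 (mem_zpowers g1)
  have hM2b : M2 ≠ ⊥ := by
    intro e; rw [e, Subgroup.mem_bot] at hg1M2; exact hg1ne hg1M2
  obtain ⟨hc2, hb2, hn2⟩ := counts hco hsim hM2 hM2b
  -- orbits are disjoint
  have hdiff : ∀ a b : G, cj a M1 ≠ cj b M2 := by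
    intro a b e
    have h2 := congrArg (cj b⁻¹) e
    rw [cj_cj, cj_cj, inv_mul_cancel, cj_one] at h2
    -- h2 : cj (b⁻¹ * a) M1 = M2
    apply hg1not
    exact mem_SS.mpr ⟨hg1ne, b⁻¹ * a, h2.symm ▸ hg1M2⟩
  have hdisj : Disjoint (SS M1) (SS M2) := by
    rw [Finset.disjoint_left]
    intro x hx1 hx2
    obtain ⟨hxne, a, hxa⟩ := mem_SS.mp hx1
    obtain ⟨-, b, hxb⟩ := mem_SS.mp hx2
    have hbot := inter_eq_bot hco hsim _ _ (isCoatom_cj a hM1) (isCoatom_cj b hM2) (hdiff a b)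
    have hx : x ∈ cj a M1 ⊓ cj b M2 := Subgroup.mem_inf.mpr ⟨hxa, hxb⟩
    rw [hbot, Subgroup.mem_bot] at hx
    exact hxne hx
  have hunion : (SS M1).card + (SS M2).card ≤ Nat.card G - 1 := by
    rw [← Finset.card_union_of_disjoint hdisj, ← herase]
    exact Finset.card_le_card (Finset.union_subset (hSSsub M1) (hSSsub M2))
  omega

end Simple

private theorem solv (n : ℕ) : ∀ (H : Type*) [Group H] [Fintype H], Fintype.card H ≤ n →
    (∀ M : Subgroup H, IsCoatom M → Group.IsNilpotent ↥M) → IsSolvable H := by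
  induction n with
  | zero =>
    intro H _ _ hcard _
    have := Fintype.card_pos (α := H)
    omega
  | succ n ih =>
    intro H _ _ hcard hco
    classical
    by_cases hcyc : ∃ g : H, Subgroup.zpowers g = ⊤
    · obtain ⟨g, hg⟩ := hcyc
      apply isSolvable_of_comm
      intro a b
      obtain ⟨i, hi⟩ := Subgroup.mem_zpowers_iff.mp (hg ▸ Subgroup.mem_top a)
      obtain ⟨j, hj⟩ := Subgroup.mem_zpowers_iff.mp (hg ▸ Subgroup.mem_top b)
      rw [← hi, ← hj, ← zpow_add, ← zpow_add, add_comm]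
    · by_cases hnorm : ∃ N : Subgroup H, N.Normal ∧ N ≠ ⊥ ∧ N ≠ ⊤
      · obtain ⟨N, hN, hNb, hNt⟩ := hnorm
        haveI := hN
        obtain ⟨M, hM, hle⟩ := (eq_top_or_exists_le_coatom N).resolve_left hNt
        haveI : Group.IsNilpotent ↥M := hco M hM
        haveI : Group.IsNilpotent ↥N :=
          nilpotent_of_mulEquiv (Subgroup.subgroupOfEquivOfLe hle)
        haveI : Fintype (H ⧸ N) := Fintype.ofFinite _
        have hqco : ∀ Q : Subgroup (H ⧸ N), IsCoatom Q → Group.IsNilpotent ↥Q := by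
          intro Q hQ
          set MQ := Q.comap (QuotientGroup.mk' N) with hMQdef
          have hsurj := QuotientGroup.mk'_surjective N
          have hMQ : MQ.map (QuotientGroup.mk' N) = Q :=
            Subgroup.map_comap_eq_self_of_surjective hsurj Q
          have hNMQ : N ≤ MQ := by
            intro x hx
            have h1 : QuotientGroup.mk' N x = 1 := (QuotientGroup.eq_one_iff x).mpr hx
            rw [hMQdef, Subgroup.mem_comap, h1]
            exact Q.one_mem
          have hMQco : IsCoatom MQ := by
            constructor
            · intro ht
              apply hQ.1
              rw [← hMQ, ht]
              exact Subgroup.map_top_of_surjective _ hsurj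
            · intro K hK
              have hNK : N ≤ K := hNMQ.trans hK.le
              have hKc : (K.map (QuotientGroup.mk' N)).comap (QuotientGroup.mk' N) = K := by
                rw [Subgroup.comap_map_eq, QuotientGroup.ker_mk', sup_of_le_left hNK]
              have hQlt : Q < K.map (QuotientGroup.mk' N) := by
                rw [← hMQ]
                apply lt_of_le_of_ne (Subgroup.map_mono hK.le)
                intro e
                have e2 := congrArg (Subgroup.comap (QuotientGroup.mk' N)) e
                rw [hKc, Subgroup.comap_map_eq, QuotientGroup.ker_mk',
                  sup_of_le_left hNMQ] at e2
                exact hK.ne e2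
              have htop := hQ.2 _ hQlt
              rw [← hKc, htop, Subgroup.comap_top]
          haveI : Group.IsNilpotent ↥MQ := hco MQ hMQco
          rw [← hMQ]
          exact nilpotent_of_surjective _ ((QuotientGroup.mk' N).subgroupMap_surjective MQ)
        have hqcard : Fintype.card (H ⧸ N) ≤ n := by
          have h1 : Nat.card (H ⧸ N) * Nat.card N = Nat.card H := by
            rw [← Subgroup.index_eq_card, Subgroup.index_mul_card]
          have h2 : 2 ≤ Nat.card N := (Subgroup.one_lt_card_iff_ne_bot N).mpr hNb
          have h3 : 0 < Nat.card (H ⧸ N) := Nat.card_pos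
          have h4 : Nat.card (H ⧸ N) * 2 ≤ Nat.card H := by
            calc Nat.card (H ⧸ N) * 2 ≤ Nat.card (H ⧸ N) * Nat.card N :=
                Nat.mul_le_mul_left _ h2
              _ = Nat.card H := h1
          have h5 : Nat.card H = Fintype.card H := Nat.card_eq_fintype_card
          have h6 : Nat.card (H ⧸ N) = Fintype.card (H ⧸ N) := Nat.card_eq_fintype_card
          omega
        haveI : Group.IsSolvable (H ⧸ N) := ih (H ⧸ N) hqcard hqco
        haveI : Group.IsSolvable ↥N := inferInstance
        exact solvable_of_ker_le_range N.subtype (QuotientGroup.mk' N)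
          (by rw [QuotientGroup.ker_mk', Subgroup.range_subtype])
      · push_neg at hcyc
        have hsim : ∀ N : Subgroup H, N.Normal → N = ⊥ ∨ N = ⊤ := by
          intro N hN
          by_contra hc
          push_neg at hc
          exact hnorm ⟨N, hN, hc.1, hc.2⟩
        rcases subsingleton_or_nontrivial H with hs | hs
        · exact (inferInstance : Group.IsSolvable H)
        · exact (no_simple hco hsim hcyc).elim

end Redei7

theorem stmt7 {G : Type*} [Group G] [Fintype G]
    (h : ∀ M : Subgroup G, IsCoatom M → Group.IsNilpotent ↥M) :
    IsSolvable G := by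
  exact Redei7.solv (Fintype.card G) G le_rfl h
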